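/- Let U be a finite set of players. Fix a set M ⊆ U with |M| = m ≥ 2 and a disjoint set K ⊆ U \ M with |K| = k ≥ 1, and let c > 0. Define v(S) = c if M ⊆ S or S ∩ K ≠ ∅, and v(S) = 0 otherwise. Then for each player p ∈ M, the Shapley value ψ_v(p) = c / ((m+k) · C(m+k−1, m−1)), and for each player q ∈ K, ψ_v(q) = (c/k) · (1 − m / ((m+k) · C(m+k−1, m−1))). -/

import Mathlib

open Finset

noncomputable section

variable {α : Type*} [Fintype α] [DecidableEq α]

/-- The set of players preceding `u` in the permutation `π` of the player set. -/
def preds (π : α ≃ Fin (Fintype.card α)) (u : α) : Finset α :=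
  Finset.univ.filter (fun x => π x < π u)

/-- Shapley value of player `u` in game `v`, via the permutation formula. -/
def shapley (v : Finset α → ℝ) (u : α) : ℝ :=
  (∑ π : α ≃ Fin (Fintype.card α), (v (insert u (preds π u)) - v (preds π u))) /
    (Fintype.card α).factorial

lemma card_equiv_fiber {γ δ κ : Type*} [Fintype γ] [Fintype δ] [Fintype κ]
    [DecidableEq γ] [DecidableEq δ] [DecidableEq κ] (c : γ → κ) (d : δ → κ)
    (h : ∀ i, Fintype.card {x // c x = i} = Fintype.card {y // d y = i}) :
    Fintype.card {e : γ ≃ δ // ∀ x, d (e x) = c x} =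
      ∏ i, (Fintype.card {x // c x = i}).factorial := by
  have E : {e : γ ≃ δ // ∀ x, d (e x) = c x} ≃ (∀ i, ({x // c x = i} ≃ {y // d y = i})) :=
    { toFun := fun e i => Equiv.subtypeEquiv e.1 (fun x => by rw [e.2 x])
      invFun := fun f => ⟨Equiv.ofFiberEquiv f, fun x => Equiv.ofFiberEquiv_map f x⟩
      left_inv := by
        intro e
        apply Subtype.ext
        apply Equiv.ext
        intro x
        simp [Equiv.ofFiberEquiv, Equiv.subtypeEquiv, Equiv.sigmaFiberEquiv]
      right_inv := by
        intro f
        funext i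
        apply Equiv.ext
        rintro ⟨x, hx⟩
        apply Subtype.ext
        subst hx
        simp [Equiv.ofFiberEquiv, Equiv.subtypeEquiv, Equiv.sigmaFiberEquiv] }
  rw [Fintype.card_congr E, Fintype.card_pi]
  exact Finset.prod_congr rfl fun i _ =>
    Fintype.card_equiv (Fintype.equivOfCardEq (h i))

lemma card_fin_lt {t : ℕ} (j : Fin t) : Fintype.card {i : Fin t // i < j} = j := by
  rw [Fintype.card_subtype]
  have : Finset.univ.filter (fun i : Fin t => i < j) = Finset.Iio j := by ext i; simp
  rw [this, Fin.card_Iio]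

lemma card_fin_gt {t : ℕ} (j : Fin t) : Fintype.card {i : Fin t // j < i} = t - 1 - j := by
  rw [Fintype.card_subtype]
  have : Finset.univ.filter (fun i : Fin t => j < i) = Finset.Ioi j := by ext i; simp
  rw [this, Fin.card_Ioi]

lemma core_count (A B : Finset α) (p : α) (hpA : p ∉ A) (hpB : p ∉ B) (hAB : Disjoint A B) :
    (Finset.univ.filter (fun π : α ≃ Fin (Fintype.card α) =>
        (∀ a ∈ A, π a < π p) ∧ (∀ b ∈ B, π p < π b))).card
      * (A.card + B.card + 1).factorial
      = (Fintype.card α).factorial * A.card.factorial * B.card.factorial := by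
  classical
  set n := Fintype.card α with hn
  set t := A.card + B.card + 1 with ht
  set T : Finset α := insert p (A ∪ B) with hT
  have hpT : p ∈ T := mem_insert_self _ _
  have hAT : ∀ a ∈ A, a ∈ T := fun a ha => mem_insert_of_mem (mem_union_left _ ha)
  have hBT : ∀ b ∈ B, b ∈ T := fun b hb => mem_insert_of_mem (mem_union_right _ hb)
  have hTcard : T.card = t := by
    rw [hT, card_insert_of_notMem (by simp [hpA, hpB]), card_union_of_disjoint hAB, ht]
  have hTc : Fintype.card {x // x ∈ T} = t := by rw [Fintype.card_coe, hTcard]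
  set cond : (α ≃ Fin n) → Prop := fun π => (∀ a ∈ A, π a < π p) ∧ (∀ b ∈ B, π p < π b)
    with hcond
  let ext : ({x // x ∈ T} ≃ {x // x ∈ T}) → Equiv.Perm α :=
    fun σ => Equiv.Perm.extendDomain σ (Equiv.refl _)
  have hext : ∀ (σ) (x : α) (hx : x ∈ T), ext σ x = ↑(σ ⟨x, hx⟩) := by
    intro σ x hx
    show Equiv.Perm.extendDomain σ (Equiv.refl _) x = ↑(σ ⟨x, hx⟩)
    rw [Equiv.Perm.extendDomain_apply_subtype _ _ hx]
    rfl
  have key : ∀ π : α ≃ Fin n,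
      (Finset.univ.filter (fun σ : {x // x ∈ T} ≃ {x // x ∈ T} =>
        cond ((ext σ).trans π))).card = A.card.factorial * B.card.factorial := by
    intro π
    set S : Finset (Fin n) := T.image π with hS
    have hScard : S.card = t := by rw [hS, card_image_of_injective _ π.injective, hTcard]
    set e : Fin t ≃o {x // x ∈ S} := S.orderIsoOfFin hScard with he
    set a' : Fin t := ⟨A.card, by omega⟩ with ha'
    set z₀ : Fin n := ↑(e a') with hz₀
    set blk : {x // x ∈ T} → Fin 3 :=
      fun x => if ↑x ∈ A then 0 else if ↑x = p then 1 else 2 with hblk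
    set dd : {x // x ∈ T} → Fin 3 :=
      fun y => if π ↑y < z₀ then 0 else if π ↑y = z₀ then 1 else 2 with hdd
    have hmemS : ∀ y : {x // x ∈ T}, π ↑y ∈ S := fun y => mem_image_of_mem _ y.2
    -- characterization of blk fibers
    have hblk0 : ∀ x : {x // x ∈ T}, blk x = 0 ↔ ↑x ∈ A := by
      intro x; rw [hblk]; dsimp only; split_ifs with h1 h2
      · simpa using h1
      · simp only [h1, iff_false]; decide
      · simp only [h1, iff_false]; decide
    have hblk1 : ∀ x : {x // x ∈ T}, blk x = 1 ↔ ↑x = p := by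
      intro x; rw [hblk]; dsimp only; split_ifs with h1 h2
      · constructor
        · intro h; exact absurd h (by decide)
        · intro h; exact absurd (h ▸ h1) hpA
      · simpa using h2
      · constructor
        · intro h; exact absurd h (by decide)
        · intro h; exact absurd h h2
    have hblk2 : ∀ x : {x // x ∈ T}, blk x = 2 ↔ ↑x ∈ B := by
      intro x
      have hxT : ↑x = p ∨ ↑x ∈ A ∨ ↑x ∈ B := by
        rcases mem_insert.1 (x.2 : ↑x ∈ insert p (A ∪ B)) with h | h
        · exact Or.inl h
        · rcases mem_union.1 h with h | h
          · exact Or.inr (Or.inl h)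
          · exact Or.inr (Or.inr h)
      rw [hblk]; dsimp only; split_ifs with h1 h2
      · constructor
        · intro h; exact absurd h (by decide)
        · intro h; exact absurd h1 (Finset.disjoint_right.1 hAB h)
      · constructor
        · intro h; exact absurd h (by decide)
        · intro h; exact absurd (h2 ▸ h) hpB
      · simp only [true_iff, iff_true]
        rcases hxT with h | h | h
        · exact absurd h h2
        · exact absurd h h1
        · exact h
    -- characterization of dd fibers
    have hdd0 : ∀ y : {x // x ∈ T}, dd y = 0 ↔ π ↑y < z₀ := by
      intro y; rw [hdd]; dsimp only; split_ifs with h1 h2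
      · simpa using h1
      · simp only [h1, iff_false]; decide
      · simp only [h1, iff_false]; decide
    have hdd1 : ∀ y : {x // x ∈ T}, dd y = 1 ↔ π ↑y = z₀ := by
      intro y; rw [hdd]; dsimp only; split_ifs with h1 h2
      · constructor
        · intro h; exact absurd h (by decide)
        · intro h; exact absurd h (ne_of_lt h1)
      · simpa using h2
      · constructor
        · intro h; exact absurd h (by decide)
        · intro h; exact absurd h h2
    have hdd2 : ∀ y : {x // x ∈ T}, dd y = 2 ↔ z₀ < π ↑y := by
      intro y; rw [hdd]; dsimp only; split_ifs with h1 h2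
      · constructor
        · intro h; exact absurd h (by decide)
        · intro h; exact absurd h1 (lt_asymm h)
      · constructor
        · intro h; exact absurd h (by decide)
        · intro h; exact absurd h2 (ne_of_gt h)
      · simp only [true_iff, iff_true]
        exact lt_of_le_of_ne (not_lt.1 h1) (Ne.symm h2)
    -- fiber cardinalities
    have hcb0 : Fintype.card {x // blk x = 0} = A.card := by
      rw [Fintype.card_congr ((Equiv.subtypeEquivRight hblk0).trans
        (Equiv.subtypeSubtypeEquivSubtype (fun {x} hx => hAT x hx)))]
      exact Fintype.card_coe A
    have hcb1 : Fintype.card {x // blk x = 1} = 1 := by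
      rw [Fintype.card_congr ((Equiv.subtypeEquivRight hblk1).trans
        (Equiv.subtypeSubtypeEquivSubtype (p := (· ∈ T)) (q := (· = p))
          (fun {x} hx => hx ▸ hpT)))]
      exact Fintype.card_subtype_eq p
    have hcb2 : Fintype.card {x // blk x = 2} = B.card := by
      rw [Fintype.card_congr ((Equiv.subtypeEquivRight hblk2).trans
        (Equiv.subtypeSubtypeEquivSubtype (fun {x} hx => hBT x hx)))]
      exact Fintype.card_coe B
    -- the bijection T ≃ S induced by π
    have hτbij : Function.Bijective
        (fun x : {x // x ∈ T} => (⟨π ↑x, hmemS x⟩ : {y // y ∈ S})) := by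
      constructor
      · intro a b hab
        exact Subtype.ext (π.injective (congrArg Subtype.val hab))
      · rintro ⟨y, hy⟩
        obtain ⟨x, hxT, rfl⟩ := mem_image.1 hy
        exact ⟨⟨x, hxT⟩, rfl⟩
    set τ : {x // x ∈ T} ≃ {y // y ∈ S} := Equiv.ofBijective _ hτbij with hτ
    have hcd0 : Fintype.card {y // dd y = 0} = A.card := by
      have e1 : {y // dd y = 0} ≃ {s : {y // y ∈ S} // ↑s < z₀} :=
        (Equiv.subtypeEquivRight hdd0).trans
          (Equiv.subtypeEquiv τ (fun y => Iff.rfl))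
      have e2 : {i : Fin t // i < a'} ≃ {s : {y // y ∈ S} // ↑s < z₀} :=
        Equiv.subtypeEquiv e.toEquiv (fun i => by
          rw [hz₀]
          constructor
          · intro h; exact Subtype.coe_lt_coe.2 (e.lt_iff_lt.2 h)
          · intro h; exact e.lt_iff_lt.1 (Subtype.coe_lt_coe.1 h))
      rw [Fintype.card_congr (e1.trans e2.symm), card_fin_lt]
    have hcd1 : Fintype.card {y // dd y = 1} = 1 := by
      obtain ⟨x₀, hx₀T, hx₀⟩ := mem_image.1 (e a').2
      have hiff : ∀ y : {x // x ∈ T}, dd y = 1 ↔ ↑y = x₀ := by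
        intro y
        rw [hdd1 y, hz₀, ← hx₀]
        exact π.apply_eq_iff_eq
      rw [Fintype.card_congr ((Equiv.subtypeEquivRight hiff).trans
        (Equiv.subtypeSubtypeEquivSubtype (p := (· ∈ T)) (q := (· = x₀))
          (fun {x} hx => hx ▸ hx₀T)))]
      exact Fintype.card_subtype_eq x₀
    have hcd2 : Fintype.card {y // dd y = 2} = B.card := by
      have e1 : {y // dd y = 2} ≃ {s : {y // y ∈ S} // z₀ < ↑s} :=
        (Equiv.subtypeEquivRight hdd2).trans
          (Equiv.subtypeEquiv τ (fun y => Iff.rfl))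
      have e2 : {i : Fin t // a' < i} ≃ {s : {y // y ∈ S} // z₀ < ↑s} :=
        Equiv.subtypeEquiv e.toEquiv (fun i => by
          rw [hz₀]
          constructor
          · intro h; exact Subtype.coe_lt_coe.2 (e.lt_iff_lt.2 h)
          · intro h; exact e.lt_iff_lt.1 (Subtype.coe_lt_coe.1 h))
      rw [Fintype.card_congr (e1.trans e2.symm), card_fin_gt]
      have ha'' : (a' : ℕ) = A.card := rfl
      omega
    have hfibers : ∀ i : Fin 3,
        Fintype.card {x // blk x = i} = Fintype.card {y // dd y = i} := by
      intro i
      fin_cases i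
      · exact hcb0.trans hcd0.symm
      · exact hcb1.trans hcd1.symm
      · exact hcb2.trans hcd2.symm
    -- condition equivalence
    have hiff : ∀ σ : {x // x ∈ T} ≃ {x // x ∈ T},
        cond ((ext σ).trans π) ↔ ∀ x, dd (σ x) = blk x := by
      intro σ
      constructor
      · rintro ⟨h1, h2⟩
        have h1' : ∀ x : {x // x ∈ T}, ↑x ∈ A → π ↑(σ x) < π ↑(σ ⟨p, hpT⟩) := by
          intro x hx
          have h := h1 ↑x hx
          rw [Equiv.trans_apply, Equiv.trans_apply, hext σ ↑x x.2, hext σ p hpT] at h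
          exact h
        have h2' : ∀ x : {x // x ∈ T}, ↑x ∈ B → π ↑(σ ⟨p, hpT⟩) < π ↑(σ x) := by
          intro x hx
          have h := h2 ↑x hx
          rw [Equiv.trans_apply, Equiv.trans_apply, hext σ ↑x x.2, hext σ p hpT] at h
          exact h
        set j : Fin t := e.symm ⟨π ↑(σ ⟨p, hpT⟩), hmemS _⟩ with hj
        have hja : A.card ≤ (j : ℕ) := by
          have hinj : Function.Injective (fun a : {x // x ∈ A} =>
              (⟨e.symm ⟨π ↑(σ ⟨↑a, hAT ↑a a.2⟩), hmemS _⟩, by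
                rw [hj, OrderIso.lt_iff_lt]
                exact Subtype.mk_lt_mk.2 (h1' ⟨↑a, hAT ↑a a.2⟩ a.2)⟩ :
                {i : Fin t // i < j})) := by
            intro a b hab
            have g1 := congrArg Subtype.val hab
            have g2 := e.symm.injective g1
            have g3 := congrArg Subtype.val g2
            have g4 := σ.injective (Subtype.ext (π.injective g3))
            exact Subtype.ext (Subtype.mk_eq_mk.1 g4)
          have hle := Fintype.card_le_of_injective _ hinj
          rwa [Fintype.card_coe, card_fin_lt] at hle
        have hjb : B.card ≤ t - 1 - (j : ℕ) := by
          have hinj : Function.Injective (fun b : {x // x ∈ B} =>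
              (⟨e.symm ⟨π ↑(σ ⟨↑b, hBT ↑b b.2⟩), hmemS _⟩, by
                rw [hj, OrderIso.lt_iff_lt]
                exact Subtype.mk_lt_mk.2 (h2' ⟨↑b, hBT ↑b b.2⟩ b.2)⟩ :
                {i : Fin t // j < i})) := by
            intro a b hab
            have g1 := congrArg Subtype.val hab
            have g2 := e.symm.injective g1
            have g3 := congrArg Subtype.val g2
            have g4 := σ.injective (Subtype.ext (π.injective g3))
            exact Subtype.ext (Subtype.mk_eq_mk.1 g4)
          have hle := Fintype.card_le_of_injective _ hinj
          rwa [Fintype.card_coe, card_fin_gt] at hle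
        have hjval : (j : ℕ) = A.card := by
          have := j.isLt
          omega
        have hz : π ↑(σ ⟨p, hpT⟩) = z₀ := by
          have hgo : e j = ⟨π ↑(σ ⟨p, hpT⟩), hmemS _⟩ := by
            rw [hj]; exact e.apply_symm_apply _
          have hja' : j = a' := Fin.ext hjval
          rw [hz₀, ← hja', hgo]
        intro x
        rcases mem_insert.1 (x.2 : ↑x ∈ insert p (A ∪ B)) with hx | hx'
        · have hxp : x = ⟨p, hpT⟩ := Subtype.ext hx
          rw [(hblk1 x).2 hx]
          exact (hdd1 _).2 (by rw [hxp]; exact hz)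
        · rcases mem_union.1 hx' with hx | hx
          · rw [(hblk0 x).2 hx]
            exact (hdd0 _).2 (hz ▸ h1' x hx)
          · rw [(hblk2 x).2 hx]
            exact (hdd2 _).2 (hz ▸ h2' x hx)
      · intro hσ
        have hz : π ↑(σ ⟨p, hpT⟩) = z₀ :=
          (hdd1 _).1 ((hσ ⟨p, hpT⟩).trans ((hblk1 _).2 rfl))
        constructor
        · intro a ha
          have hlt : π ↑(σ ⟨a, hAT a ha⟩) < z₀ :=
            (hdd0 _).1 ((hσ ⟨a, hAT a ha⟩).trans ((hblk0 _).2 ha))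
          rw [Equiv.trans_apply, Equiv.trans_apply, hext σ a (hAT a ha), hext σ p hpT, hz]
          exact hlt
        · intro b hb
          have hlt : z₀ < π ↑(σ ⟨b, hBT b hb⟩) :=
            (hdd2 _).1 ((hσ ⟨b, hBT b hb⟩).trans ((hblk2 _).2 hb))
          rw [Equiv.trans_apply, Equiv.trans_apply, hext σ b (hBT b hb), hext σ p hpT, hz]
          exact hlt
    calc (Finset.univ.filter (fun σ : {x // x ∈ T} ≃ {x // x ∈ T} =>
            cond ((ext σ).trans π))).card
        = (Finset.univ.filter (fun σ : {x // x ∈ T} ≃ {x // x ∈ T} =>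
            ∀ x, dd (σ x) = blk x)).card := by
          congr 1
          exact Finset.filter_congr (fun σ _ => hiff σ)
      _ = Fintype.card {σ : {x // x ∈ T} ≃ {x // x ∈ T} // ∀ x, dd (σ x) = blk x} :=
          (Fintype.card_subtype _).symm
      _ = ∏ i, (Fintype.card {x // blk x = i}).factorial :=
          card_equiv_fiber blk dd hfibers
      _ = A.card.factorial * B.card.factorial := by
          rw [Fin.prod_univ_three, hcb0, hcb1, hcb2, Nat.factorial_one, mul_one]
  -- outer double counting
  have hcardPerm : Fintype.card ({x // x ∈ T} ≃ {x // x ∈ T}) = t.factorial := by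
    rw [Fintype.card_equiv (Equiv.refl _), hTc]
  have hreindex : ∀ σ : {x // x ∈ T} ≃ {x // x ∈ T},
      (Finset.univ.filter cond).card =
      (Finset.univ.filter (fun π : α ≃ Fin n => cond ((ext σ).trans π))).card := by
    intro σ
    apply Finset.card_bij' (fun π _ => (ext σ).symm.trans π) (fun π _ => (ext σ).trans π)
    · intro π hπ
      rw [Finset.mem_filter] at hπ ⊢
      refine ⟨Finset.mem_univ _, ?_⟩
      rw [← Equiv.trans_assoc, Equiv.self_trans_symm, Equiv.refl_trans]
      exact hπ.2
    · intro π hπ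
      rw [Finset.mem_filter] at hπ ⊢
      exact ⟨Finset.mem_univ _, hπ.2⟩
    · intro π hπ
      rw [← Equiv.trans_assoc, Equiv.self_trans_symm, Equiv.refl_trans]
    · intro π hπ
      rw [← Equiv.trans_assoc, Equiv.symm_trans_self, Equiv.refl_trans]
  have houter : (Finset.univ.filter cond).card * t.factorial
      = n.factorial * (A.card.factorial * B.card.factorial) := by
    calc (Finset.univ.filter cond).card * t.factorial
        = ∑ _σ : {x // x ∈ T} ≃ {x // x ∈ T}, (Finset.univ.filter cond).card := by
          rw [Finset.sum_const, Finset.card_univ, hcardPerm, smul_eq_mul, mul_comm]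
      _ = ∑ σ : {x // x ∈ T} ≃ {x // x ∈ T},
            (Finset.univ.filter (fun π : α ≃ Fin n => cond ((ext σ).trans π))).card :=
          Finset.sum_congr rfl (fun σ _ => hreindex σ)
      _ = ∑ σ : {x // x ∈ T} ≃ {x // x ∈ T}, ∑ π : α ≃ Fin n,
            if cond ((ext σ).trans π) then 1 else 0 :=
          Finset.sum_congr rfl (fun σ _ => Finset.card_filter _ _)
      _ = ∑ π : α ≃ Fin n, ∑ σ : {x // x ∈ T} ≃ {x // x ∈ T},
            if cond ((ext σ).trans π) then 1 else 0 := Finset.sum_comm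
      _ = ∑ π : α ≃ Fin n,
            (Finset.univ.filter (fun σ : {x // x ∈ T} ≃ {x // x ∈ T} =>
              cond ((ext σ).trans π))).card :=
          Finset.sum_congr rfl (fun π _ => (Finset.card_filter _ _).symm)
      _ = ∑ _π : α ≃ Fin n, A.card.factorial * B.card.factorial :=
          Finset.sum_congr rfl (fun π _ => key π)
      _ = n.factorial * (A.card.factorial * B.card.factorial) := by
          rw [Finset.sum_const, Finset.card_univ, Fintype.card_equiv (Fintype.equivFin α),
            smul_eq_mul]
  rw [← mul_assoc] at houter
  exact houter

theorem shapley_unique_multi_owner_synthesis (M K : Finset α) (hMK : Disjoint M K)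
    (m k : ℕ) (hm : M.card = m) (hk : K.card = k) (hm2 : 2 ≤ m) (hk1 : 1 ≤ k)
    (c : ℝ) (hc : 0 < c) (v : Finset α → ℝ)
    (hv : ∀ S, v S = if M ⊆ S ∨ (S ∩ K).Nonempty then c else 0) :
    (∀ p ∈ M, shapley v p =
        c / (((m + k) * Nat.choose (m + k - 1) (m - 1) : ℕ) : ℝ)) ∧
    (∀ q ∈ K, shapley v q =
        (c / k) * (1 - (m : ℝ) / (((m + k) * Nat.choose (m + k - 1) (m - 1) : ℕ) : ℝ))) := by
  have hmem_preds : ∀ (π : α ≃ Fin (Fintype.card α)) u x, x ∈ preds π u ↔ π x < π u := by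
    intro π u x; simp [preds]
  have hself : ∀ (π : α ≃ Fin (Fintype.card α)) u, u ∉ preds π u := by
    intro π u h; exact lt_irrefl _ ((hmem_preds π u u).1 h)
  set n := Fintype.card α with hn
  set D := (m + k) * Nat.choose (m + k - 1) (m - 1) with hDdef
  have hDpos : 0 < D := by
    apply Nat.mul_pos (by omega)
    exact Nat.choose_pos (by omega)
  have hD : D * ((m-1).factorial * k.factorial) = (m+k).factorial := by
    have h1 := Nat.choose_mul_factorial_mul_factorial (show m-1 ≤ m+k-1 by omega)
    have he : (m+k-1) - (m-1) = k := by omega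
    rw [he] at h1
    calc D * ((m-1).factorial * k.factorial)
        = (m+k) * (Nat.choose (m+k-1) (m-1) * (m-1).factorial * k.factorial) := by
          rw [hDdef]; ring
      _ = (m+k) * (m+k-1).factorial := by rw [h1]
      _ = (m+k).factorial := Nat.mul_factorial_pred (by omega)
  constructor
  · -- members of M
    intro p hp
    have hpK : p ∉ K := disjoint_left.1 hMK hp
    have hterm : ∀ π : α ≃ Fin n, v (insert p (preds π p)) - v (preds π p) =
        if (∀ a ∈ M.erase p, π a < π p) ∧ (∀ b ∈ K, π p < π b) then c else 0 := by
      intro π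
      rw [hv, hv]
      by_cases hcond : (∀ a ∈ M.erase p, π a < π p) ∧ (∀ b ∈ K, π p < π b)
      · rw [if_pos hcond]
        have hPK : ¬ ((preds π p) ∩ K).Nonempty := by
          rintro ⟨x, hx⟩
          rw [mem_inter] at hx
          exact lt_asymm ((hmem_preds π p x).1 hx.1) (hcond.2 x hx.2)
        have hMP : ¬ M ⊆ preds π p := fun h => hself π p (h hp)
        rw [if_pos (Or.inl (Finset.subset_insert_iff.2 (fun a ha =>
          (hmem_preds π p a).2 (hcond.1 a ha))))]
        rw [if_neg (by rintro (h | h); exacts [hMP h, hPK h]), sub_zero]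
      · rw [if_neg hcond]
        by_cases h1 : ((preds π p) ∩ K).Nonempty
        · rw [if_pos (Or.inr h1), if_pos (Or.inr (h1.mono
            (inter_subset_inter (subset_insert _ _) Finset.Subset.rfl))), sub_self]
        · have hKpart : ∀ b ∈ K, π p < π b := by
            intro b hb
            have hbP : ¬ π b < π p := fun h =>
              h1 ⟨b, mem_inter.2 ⟨(hmem_preds π p b).2 h, hb⟩⟩
            have hne : π p ≠ π b := fun h => hpK (by rw [π.injective h]; exact hb)
            exact lt_of_le_of_ne (not_lt.1 hbP) hne
          have hApart : ¬ ∀ a ∈ M.erase p, π a < π p := fun h => hcond ⟨h, hKpart⟩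
          have hMI : ¬ M ⊆ insert p (preds π p) := by
            intro h
            exact hApart (fun a ha => (hmem_preds π p a).1 (Finset.subset_insert_iff.1 h ha))
          have hIK : ¬ ((insert p (preds π p)) ∩ K).Nonempty := by
            rintro ⟨x, hx⟩
            rw [mem_inter, mem_insert] at hx
            rcases hx.1 with rfl | hxP
            · exact hpK hx.2
            · exact h1 ⟨x, mem_inter.2 ⟨hxP, hx.2⟩⟩
          have hMP : ¬ M ⊆ preds π p := fun h => hself π p (h hp)
          rw [if_neg (by rintro (h | h); exacts [hMI h, hIK h]),
            if_neg (by rintro (h | h); exacts [hMP h, h1 h]), sub_self]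
    have hsum : ∑ π : α ≃ Fin n, (v (insert p (preds π p)) - v (preds π p)) =
        ((Finset.univ.filter (fun π : α ≃ Fin n =>
          (∀ a ∈ M.erase p, π a < π p) ∧ (∀ b ∈ K, π p < π b))).card : ℝ) * c := by
      rw [Finset.sum_congr rfl (fun π _ => hterm π), Finset.sum_ite,
        Finset.sum_const, Finset.sum_const_zero, add_zero, nsmul_eq_mul]
    set N := (Finset.univ.filter (fun π : α ≃ Fin n =>
      (∀ a ∈ M.erase p, π a < π p) ∧ (∀ b ∈ K, π p < π b))).card with hNdef
    have hcore := core_count (M.erase p) K p (notMem_erase _ _) hpK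
      (hMK.mono_left (erase_subset _ _))
    rw [card_erase_of_mem hp, hm, hk] at hcore
    have hmk' : m - 1 + k + 1 = m + k := by omega
    rw [hmk'] at hcore
    -- hcore : N * (m+k)! = n! * (m-1)! * k!
    have hND : N * D = n.factorial := by
      have hpos : 0 < (m-1).factorial * k.factorial :=
        Nat.mul_pos (Nat.factorial_pos _) (Nat.factorial_pos _)
      apply Nat.eq_of_mul_eq_mul_right hpos
      calc N * D * ((m-1).factorial * k.factorial)
          = N * (D * ((m-1).factorial * k.factorial)) := by ring
        _ = N * (m+k).factorial := by rw [hD]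
        _ = n.factorial * (m-1).factorial * k.factorial := hcore
        _ = n.factorial * ((m-1).factorial * k.factorial) := by ring
    have hNne : (N : ℝ) ≠ 0 := by
      intro h
      rw [Nat.cast_eq_zero] at h
      rw [h, zero_mul] at hND
      exact (Nat.factorial_pos n).ne' hND.symm
    rw [shapley, hsum, ← hND]
    push_cast
    exact mul_div_mul_left _ _ hNne
  · -- members of K
    intro q hq
    have hqM : q ∉ M := disjoint_right.1 hMK hq
    have hterm : ∀ π : α ≃ Fin n, v (insert q (preds π q)) - v (preds π q) =
        if (∀ b ∈ K.erase q, π q < π b) ∧ ¬ (∀ a ∈ M, π a < π q) then c else 0 := by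
      intro π
      rw [hv, hv]
      rw [if_pos (Or.inr ⟨q, mem_inter.2 ⟨mem_insert_self _ _, hq⟩⟩)]
      by_cases hcond : (∀ b ∈ K.erase q, π q < π b) ∧ ¬ (∀ a ∈ M, π a < π q)
      · rw [if_pos hcond, if_neg, sub_zero]
        rintro (h | ⟨x, hx⟩)
        · exact hcond.2 (fun a ha => (hmem_preds π q a).1 (h ha))
        · rw [mem_inter] at hx
          have hxq : x ≠ q := fun h => hself π q (h ▸ hx.1)
          exact lt_asymm ((hmem_preds π q x).1 hx.1)
            (hcond.1 x (mem_erase.2 ⟨hxq, hx.2⟩))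
      · rw [if_neg hcond]
        by_cases hY : ∀ a ∈ M, π a < π q
        · rw [if_pos (Or.inl (show M ⊆ preds π q from
            fun a ha => (hmem_preds π q a).2 (hY a ha))), sub_self]
        · have hX : ¬ ∀ b ∈ K.erase q, π q < π b := fun h => hcond ⟨h, hY⟩
          push_neg at hX
          obtain ⟨b, hb, hbq⟩ := hX
          rw [mem_erase] at hb
          have hne : π b ≠ π q := fun h => hb.1 (π.injective h)
          have : π b < π q := lt_of_le_of_ne hbq hne
          rw [if_pos (Or.inr ⟨b, mem_inter.2 ⟨(hmem_preds π q b).2 this, hb.2⟩⟩), sub_self]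
    have hsum : ∑ π : α ≃ Fin n, (v (insert q (preds π q)) - v (preds π q)) =
        ((Finset.univ.filter (fun π : α ≃ Fin n =>
          (∀ b ∈ K.erase q, π q < π b) ∧ ¬ (∀ a ∈ M, π a < π q))).card : ℝ) * c := by
      rw [Finset.sum_congr rfl (fun π _ => hterm π), Finset.sum_ite,
        Finset.sum_const, Finset.sum_const_zero, add_zero, nsmul_eq_mul]
    set Nc := (Finset.univ.filter (fun π : α ≃ Fin n =>
      (∀ b ∈ K.erase q, π q < π b) ∧ ¬ (∀ a ∈ M, π a < π q))).card with hNcdef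
    set N1 := (Finset.univ.filter (fun π : α ≃ Fin n =>
      (∀ b ∈ K.erase q, π q < π b))).card with hN1def
    set N2 := (Finset.univ.filter (fun π : α ≃ Fin n =>
      (∀ a ∈ M, π a < π q) ∧ (∀ b ∈ K.erase q, π q < π b))).card with hN2def
    -- split
    have hsplit : N2 + Nc = N1 := by
      have h1 := Finset.card_filter_add_card_filter_not
        (s := Finset.univ.filter (fun π : α ≃ Fin n => (∀ b ∈ K.erase q, π q < π b)))
        (p := fun π => ∀ a ∈ M, π a < π q)
      rw [Finset.filter_filter, Finset.filter_filter] at h1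
      have hA : (Finset.univ.filter (fun π : α ≃ Fin n =>
          (∀ b ∈ K.erase q, π q < π b) ∧ (∀ a ∈ M, π a < π q))).card = N2 := by
        rw [hN2def]
        congr 1
        apply Finset.filter_congr
        intro π _
        exact and_comm
      have hB : (Finset.univ.filter (fun π : α ≃ Fin n =>
          (∀ b ∈ K.erase q, π q < π b) ∧ ¬ (∀ a ∈ M, π a < π q))).card = Nc := by
        rw [hNcdef]
      rw [hA, hB] at h1
      omega
    -- core counts
    have hqK' : q ∉ K.erase q := notMem_erase _ _
    have hcore1 := core_count (∅ : Finset α) (K.erase q) q (notMem_empty _) hqK'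
      (disjoint_empty_left _)
    have hcore2 := core_count M (K.erase q) q hqM hqK'
      (disjoint_of_subset_right (erase_subset _ _) hMK)
    rw [card_empty, card_erase_of_mem hq, hk] at hcore1
    rw [hm, card_erase_of_mem hq, hk] at hcore2
    have hk' : 0 + (k - 1) + 1 = k := by omega
    have hmk' : m + (k - 1) + 1 = m + k := by omega
    rw [hk'] at hcore1
    rw [hmk'] at hcore2
    -- simplify the empty-set filter in hcore1
    have hfe : (Finset.univ.filter (fun π : α ≃ Fin n =>
        (∀ a ∈ (∅ : Finset α), π a < π q) ∧ (∀ b ∈ K.erase q, π q < π b))).card = N1 := by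
      rw [hN1def]
      congr 1
      apply Finset.filter_congr
      intro π _
      simp
    rw [hfe, Nat.factorial_zero, mul_one] at hcore1
    -- hcore1 : N1 * k! = n! * (k-1)!
    have hN1k : N1 * k = n.factorial := by
      have hpos : 0 < (k-1).factorial := Nat.factorial_pos _
      apply Nat.eq_of_mul_eq_mul_right hpos
      calc N1 * k * (k-1).factorial = N1 * (k * (k-1).factorial) := by ring
        _ = N1 * k.factorial := by rw [Nat.mul_factorial_pred (by omega)]
        _ = n.factorial * (k-1).factorial := hcore1
    -- hcore2 : N2 * (m+k)! = n! * m! * (k-1)!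
    have hN2Dk : N2 * D * k = n.factorial * m := by
      have hpos : 0 < (m-1).factorial * (k-1).factorial :=
        Nat.mul_pos (Nat.factorial_pos _) (Nat.factorial_pos _)
      apply Nat.eq_of_mul_eq_mul_right hpos
      calc N2 * D * k * ((m-1).factorial * (k-1).factorial)
          = N2 * (D * ((m-1).factorial * (k * (k-1).factorial))) := by ring
        _ = N2 * (D * ((m-1).factorial * k.factorial)) := by
            rw [Nat.mul_factorial_pred (by omega : k ≠ 0)]
        _ = N2 * (m+k).factorial := by rw [hD]
        _ = n.factorial * m.factorial * (k-1).factorial := hcore2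
        _ = n.factorial * (m * (m-1).factorial) * (k-1).factorial := by
            rw [Nat.mul_factorial_pred (by omega : m ≠ 0)]
        _ = n.factorial * m * ((m-1).factorial * (k-1).factorial) := by ring
    -- final real computation
    rw [shapley, hsum]
    have hNc : (Nc : ℝ) = (N1 : ℝ) - N2 := by
      have h : ((N2 + Nc : ℕ) : ℝ) = (N1 : ℝ) := by exact_mod_cast congrArg (Nat.cast : ℕ → ℝ) hsplit
      push_cast at h
      linarith
    have e1 : (N1 : ℝ) * k = (n.factorial : ℝ) := by exact_mod_cast hN1k
    have e2 : (N2 : ℝ) * D * k = (n.factorial : ℝ) * m := by exact_mod_cast hN2Dk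
    have hfne : ((n.factorial : ℕ) : ℝ) ≠ 0 := Nat.cast_ne_zero.2 (Nat.factorial_pos _).ne'
    have hkne : (k : ℝ) ≠ 0 := Nat.cast_ne_zero.2 (by omega)
    have hDne : (D : ℝ) ≠ 0 := Nat.cast_ne_zero.2 hDpos.ne'
    have hN1r : (N1 : ℝ) = (n.factorial : ℝ) / k := by
      rw [eq_div_iff hkne]; exact e1
    have hN2r : (N2 : ℝ) = (n.factorial : ℝ) * m / ((D : ℝ) * k) := by
      rw [eq_div_iff (mul_ne_zero hDne hkne)]; linear_combination e2
    rw [hNc, hN1r, hN2r]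
    field_simp
    ring

end
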